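/- Let a < b be real numbers and let h : ℝ → ℝ be continuous on [a,b]. Let h̄ = (1/(b−a))·∫_a^b h(x)dx, let m = min_{x∈[a,b]} h(x), and suppose h̄ ≥ 0 and m < h̄. Set ε = min(10⁻¹¹, h̄), Φ = min(1, (h̄ − ε)/(h̄ − m)), and define the limited function h^new(x) = Φ·(h(x) − h̄) + h̄. Then: (i) 0 ≤ Φ ≤ 1; (ii) h^new(x) ≥ ε ≥ 0 for every x ∈ [a,b]; (iii) (1/(b−a))·∫_a^b h^new(x)dx = h̄, i.e. the limiter preserves the cell average. -/

import Mathlib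

/-- The Xing–Zhang positivity-preserving limiter: `0 ≤ Φ ≤ 1`, the limited
function is bounded below by `ε ≥ 0` on the cell, and the cell average is
preserved. -/
theorem positivity_limiter (a b : ℝ) (hab : a < b) (h : ℝ → ℝ)
    (hcont : ContinuousOn h (Set.Icc a b))
    (hbar m ε Φ : ℝ)
    (hbar_def : hbar = (1 / (b - a)) * ∫ x in a..b, h x)
    (m_def : m = sInf (h '' Set.Icc a b))
    (hbar_nonneg : 0 ≤ hbar) (hm_lt : m < hbar)
    (ε_def : ε = min (1e-11) hbar)
    (Φ_def : Φ = min 1 ((hbar - ε) / (hbar - m))) :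
    (0 ≤ Φ ∧ Φ ≤ 1) ∧
    (∀ x ∈ Set.Icc a b, ε ≤ Φ * (h x - hbar) + hbar) ∧ (0 ≤ ε) ∧
    ((1 / (b - a)) * ∫ x in a..b, (Φ * (h x - hbar) + hbar) = hbar) := by
  have hba : (0:ℝ) < b - a := by linarith
  have hε_nonneg : 0 ≤ ε := by
    rw [ε_def]; exact le_min (by norm_num) hbar_nonneg
  have hε_le : ε ≤ hbar := by rw [ε_def]; exact min_le_right _ _
  have hdenom : 0 < hbar - m := by linarith
  have hratio_nonneg : 0 ≤ (hbar - ε) / (hbar - m) :=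
    div_nonneg (by linarith) hdenom.le
  have hΦ_nonneg : 0 ≤ Φ := by rw [Φ_def]; exact le_min zero_le_one hratio_nonneg
  have hΦ_le_one : Φ ≤ 1 := by rw [Φ_def]; exact min_le_left _ _
  have hΦ_le_ratio : Φ ≤ (hbar - ε) / (hbar - m) := by
    rw [Φ_def]; exact min_le_right _ _
  refine ⟨⟨hΦ_nonneg, hΦ_le_one⟩, ?_, hε_nonneg, ?_⟩
  · intro x hx
    have hm_le : m ≤ h x := by
      rw [m_def]
      apply csInf_le
      · exact ((isCompact_Icc.image_of_continuousOn hcont).isBounded).bddBelow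
      · exact ⟨x, hx, rfl⟩
    rcases le_or_gt hbar (h x) with hc | hc
    · nlinarith
    · have key : (hbar - ε) / (hbar - m) * (h x - hbar) ≤ Φ * (h x - hbar) :=
        mul_le_mul_of_nonpos_right hΦ_le_ratio (by linarith)
      have h2 : (hbar - ε) / (hbar - m) * (m - hbar) ≤
          (hbar - ε) / (hbar - m) * (h x - hbar) :=
        mul_le_mul_of_nonneg_left (by linarith) hratio_nonneg
      have h3 : (hbar - ε) / (hbar - m) * (m - hbar) = -(hbar - ε) := by
        field_simp; ring
      linarith
  · have hint : IntervalIntegrable h MeasureTheory.volume a b := by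
      apply ContinuousOn.intervalIntegrable
      rwa [Set.uIcc_of_le hab.le]
    have hI : ∫ x in a..b, h x = hbar * (b - a) := by
      rw [hbar_def]; field_simp
    have : ∫ x in a..b, (Φ * (h x - hbar) + hbar) =
        Φ * ((∫ x in a..b, h x) - hbar * (b - a)) + hbar * (b - a) := by
      rw [intervalIntegral.integral_add ((hint.sub (intervalIntegrable_const)).const_mul Φ)
        intervalIntegrable_const]
      rw [intervalIntegral.integral_const_mul,
        intervalIntegral.integral_sub hint intervalIntegrable_const,
        intervalIntegral.integral_const]
      simp [smul_eq_mul]; ring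
    rw [this, hI]
    field_simp
    ring
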